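/- arXiv:0902.2102 — 2 statements merged into one kernel-verified Lean document; each statement's English description precedes it below -/
import Mathlib

section
/- (Jensen's inequality on the range of P.) Let f : ℝ^n → ℝ be separately convex and let v = (v_1,…,v_n) ∈ L^p(ℝ^n, ℝ^n) be such that each v_j is a finite linear combination of Haar functions h_Q^{(ε)}. Then f( ∫_{[0,1]^n} P(v)(x) dx ) ≤ ∫_{[0,1]^n} f(P(v)(x)) dx, where P(v) = (P^{(e_1)}(v_1), …, P^{(e_n)}(v_n)). -/
open MeasureTheory Filter
open scoped ENNReal Topology

noncomputable section

/-- The Haar function on `[0,1)`. -/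
def haar0 (x : ℝ) : ℝ :=
  Set.indicator (Set.Ico (0:ℝ) (1/2)) (fun _ => (1:ℝ)) x
    - Set.indicator (Set.Ico (1/2:ℝ) 1) (fun _ => (1:ℝ)) x

/-- A dyadic cube in `ℝ^n`, recorded by the exponent `k` of its side length `2^k`
and the position `pos`; the cube is `∏_t [pos t · 2^k, (pos t + 1) · 2^k)`. -/
abbrev DyadicCube (n : ℕ) := ℤ × (Fin n → ℤ)

/-- The (L∞-normalized) Haar function on the dyadic interval `[i·2^k, (i+1)·2^k)`. -/
def haarInt (k i : ℤ) (x : ℝ) : ℝ := haar0 ((x - (i : ℝ) * 2 ^ k) / 2 ^ k)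

/-- The indicator of the dyadic interval `[i·2^k, (i+1)·2^k)`. -/
def indInt (k i : ℤ) (x : ℝ) : ℝ :=
  Set.indicator (Set.Ico ((i:ℝ) * 2 ^ k) (((i:ℝ)+1) * 2 ^ k)) (fun _ => (1:ℝ)) x

/-- The Haar function `h_Q^{(ε)}` on a dyadic cube `Q` with direction `ε ∈ {0,1}^n`:
the factor in coordinate `t` is `h_{I_t}` if `ε t` and `1_{I_t}` otherwise. -/
def haarCube (n : ℕ) (ε : Fin n → Bool) (Q : DyadicCube n) (x : Fin n → ℝ) : ℝ :=
  ∏ t, (if ε t then haarInt Q.1 (Q.2 t) (x t) else indInt Q.1 (Q.2 t) (x t))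

/-- The volume `|Q| = 2^{kn}` of a dyadic cube. -/
def cubeVol (n : ℕ) (Q : DyadicCube n) : ℝ := 2 ^ (Q.1 * (n:ℤ))

/-- The pointset of a dyadic cube. -/
def cubeSet (n : ℕ) (Q : DyadicCube n) : Set (Fin n → ℝ) :=
  Set.univ.pi fun t => Set.Ico ((Q.2 t : ℝ) * 2 ^ Q.1) (((Q.2 t : ℝ) + 1) * 2 ^ Q.1)

/-- The directional Haar projection `P^{(ε)}`. -/
def haarProj (n : ℕ) (ε : Fin n → Bool) (u : (Fin n → ℝ) → ℝ) (x : Fin n → ℝ) : ℝ :=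
  ∑' Q : DyadicCube n, (∫ y, u y * haarCube n ε Q y) * haarCube n ε Q x / cubeVol n Q

/-- The Fourier transform `ℱu(ξ) = ∫ e^{-i⟨x,ξ⟩} u(x) dx`. -/
def fourierT (n : ℕ) (u : (Fin n → ℝ) → ℂ) (ξ : Fin n → ℝ) : ℂ :=
  ∫ x : Fin n → ℝ, Complex.exp (-(Complex.I) * ((∑ t, x t * ξ t : ℝ) : ℂ)) * u x

/-- The inverse Fourier transform. -/
def invFourierT (n : ℕ) (v : (Fin n → ℝ) → ℂ) (x : Fin n → ℝ) : ℂ :=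
  (((2 * Real.pi) ^ n : ℝ) : ℂ)⁻¹ *
    ∫ ξ : Fin n → ℝ, Complex.exp (Complex.I * ((∑ t, x t * ξ t : ℝ) : ℂ)) * v ξ

/-- The Riesz transform `R_i u = -√-1 ℱ⁻¹((ξ_i/|ξ|) ℱu)`. -/
def riesz (n : ℕ) (i : Fin n) (u : (Fin n → ℝ) → ℝ) (x : Fin n → ℝ) : ℂ :=
  -(Complex.I) * invFourierT n
    (fun ξ => ((ξ i / Real.sqrt (∑ t, ξ t ^ 2) : ℝ) : ℂ) * fourierT n (fun y => ((u y : ℝ) : ℂ)) ξ) x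

/-- The `j`-th standard direction `e_j`. -/
def stdDir (n : ℕ) (j : Fin n) : Fin n → Bool := fun t => decide (t = j)

end
/-- A function `f : ℝ^n → ℝ` is separately convex if it is convex in each of its
variables separately. -/
def SeparatelyConvex (n : ℕ) (f : (Fin n → ℝ) → ℝ) : Prop :=
  ∀ (i : Fin n) (a : Fin n → ℝ),
    ConvexOn ℝ Set.univ (fun t : ℝ => f (Function.update a i t))

noncomputable section
open Set

def dI (k i : ℤ) : Set ℝ := Set.Ico ((i:ℝ) * 2 ^ k) (((i:ℝ)+1) * 2 ^ k)

lemma indInt_def' (k i : ℤ) : indInt k i = (dI k i).indicator (fun _ => (1:ℝ)) := rfl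

lemma two_zpow_pos (k : ℤ) : (0:ℝ) < 2 ^ k := zpow_pos (by norm_num) k

lemma two_zpow_succ (k : ℤ) : (2:ℝ) ^ k = 2 ^ (k-1) * 2 := by
  rw [← zpow_add_one₀ (by norm_num : (2:ℝ) ≠ 0)]; ring_nf

lemma haarInt_eq_sub (k i : ℤ) (x : ℝ) :
    haarInt k i x = indInt (k-1) (2*i) x - indInt (k-1) (2*i+1) x := by
  have hk : (2:ℝ) ^ k = 2 ^ (k-1) * 2 := two_zpow_succ k
  have hik : (i:ℝ) * 2 ^ k = (i:ℝ) * 2 ^ (k-1) * 2 := by rw [hk]; ring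
  have hpos := two_zpow_pos (k-1)
  have hposk := two_zpow_pos k
  unfold haarInt haar0 indInt
  have e1 : ((x - (i:ℝ) * 2 ^ k) / 2 ^ k ∈ Set.Ico (0:ℝ) (1/2)) ↔
      (x ∈ Set.Ico (((2*i : ℤ):ℝ) * 2 ^ (k-1)) ((((2*i : ℤ):ℝ)+1) * 2 ^ (k-1))) := by
    rw [Set.mem_Ico, Set.mem_Ico, div_lt_iff₀ hposk, le_div_iff₀ hposk]
    push_cast
    constructor
    · rintro ⟨h1, h2'⟩; constructor <;> nlinarith [hik, hk]
    · rintro ⟨h1, h2'⟩; constructor <;> nlinarith [hik, hk]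
  have e2 : ((x - (i:ℝ) * 2 ^ k) / 2 ^ k ∈ Set.Ico (1/2:ℝ) 1) ↔
      (x ∈ Set.Ico (((2*i+1 : ℤ):ℝ) * 2 ^ (k-1)) ((((2*i+1 : ℤ):ℝ)+1) * 2 ^ (k-1))) := by
    rw [Set.mem_Ico, Set.mem_Ico, le_div_iff₀ hposk, div_lt_one hposk]
    push_cast
    constructor
    · rintro ⟨h1, h2'⟩; constructor <;> nlinarith [hik, hk]
    · rintro ⟨h1, h2'⟩; constructor <;> nlinarith [hik, hk]
  by_cases hx1 : (x - (i:ℝ) * 2 ^ k) / 2 ^ k ∈ Set.Ico (0:ℝ) (1/2) <;>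
  by_cases hx2 : (x - (i:ℝ) * 2 ^ k) / 2 ^ k ∈ Set.Ico (1/2:ℝ) 1
  · exfalso; rcases hx1 with ⟨_, h1⟩; rcases hx2 with ⟨h2', _⟩; linarith
  · rw [Set.indicator_of_mem hx1, Set.indicator_of_notMem hx2,
      Set.indicator_of_mem (e1.mp hx1), Set.indicator_of_notMem (fun h => hx2 (e2.mpr h))]
  · rw [Set.indicator_of_notMem hx1, Set.indicator_of_mem hx2,
      Set.indicator_of_notMem (fun h => hx1 (e1.mpr h)), Set.indicator_of_mem (e2.mp hx2)]
  · rw [Set.indicator_of_notMem hx1, Set.indicator_of_notMem hx2,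
      Set.indicator_of_notMem (fun h => hx1 (e1.mpr h)),
      Set.indicator_of_notMem (fun h => hx2 (e2.mpr h))]

lemma measurable_indInt (k i : ℤ) : Measurable (indInt k i) :=
  (measurable_const.indicator measurableSet_Ico)

lemma integrable_indInt (k i : ℤ) : Integrable (indInt k i) := by
  unfold indInt
  rw [integrable_indicator_iff (by exact measurableSet_Ico)]
  exact integrableOn_const (by exact measure_Ico_lt_top.ne)

lemma integral_indInt (k i : ℤ) : ∫ x, indInt k i x = 2 ^ k := by
  unfold indInt
  rw [integral_indicator_const (1:ℝ) (by exact measurableSet_Ico), measureReal_def, Real.volume_Ico,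
    smul_eq_mul, mul_one,
    ENNReal.toReal_ofReal (by nlinarith [two_zpow_pos k] :
      (0:ℝ) ≤ ((i:ℝ)+1) * 2 ^ k - (i:ℝ) * 2 ^ k)]
  ring

lemma measurable_haarInt (k i : ℤ) : Measurable (haarInt k i) := by
  have : haarInt k i = fun x => indInt (k-1) (2*i) x - indInt (k-1) (2*i+1) x :=
    funext (haarInt_eq_sub k i)
  rw [this]; exact (measurable_indInt _ _).sub (measurable_indInt _ _)

lemma integrable_haarInt (k i : ℤ) : Integrable (haarInt k i) := by
  have : haarInt k i = fun x => indInt (k-1) (2*i) x - indInt (k-1) (2*i+1) x :=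
    funext (haarInt_eq_sub k i)
  rw [this]; exact (integrable_indInt _ _).sub (integrable_indInt _ _)

lemma integral_haarInt (k i : ℤ) : ∫ x, haarInt k i x = 0 := by
  have : haarInt k i = fun x => indInt (k-1) (2*i) x - indInt (k-1) (2*i+1) x :=
    funext (haarInt_eq_sub k i)
  rw [this, integral_sub (integrable_indInt _ _) (integrable_indInt _ _),
    integral_indInt, integral_indInt, sub_self]

lemma indInt_eq_zero_of_not_mem {k i : ℤ} {x : ℝ} (h : x ∉ dI k i) : indInt k i x = 0 :=
  Set.indicator_of_notMem h _

lemma haarInt_eq_zero_of_not_mem {k i : ℤ} {x : ℝ} (h : x ∉ dI k i) : haarInt k i x = 0 := by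
  unfold haarInt haar0
  rw [dI, Set.mem_Ico, not_and_or] at h
  have hpos := two_zpow_pos k
  rcases h with h | h
  · push_neg at h
    rw [Set.indicator_of_notMem, Set.indicator_of_notMem, sub_zero]
    · rw [Set.mem_Ico]; rintro ⟨h1, _⟩
      rw [le_div_iff₀ hpos] at h1; nlinarith
    · rw [Set.mem_Ico]; rintro ⟨h1, _⟩
      rw [le_div_iff₀ hpos] at h1; nlinarith
  · push_neg at h
    rw [Set.indicator_of_notMem, Set.indicator_of_notMem, sub_zero]
    · rw [Set.mem_Ico]; rintro ⟨_, h2⟩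
      rw [div_lt_one hpos] at h2; nlinarith
    · rw [Set.mem_Ico]; rintro ⟨_, h2⟩
      rw [div_lt_iff₀ hpos] at h2; nlinarith

lemma abs_indInt_le (k i : ℤ) (x : ℝ) : |indInt k i x| ≤ 1 := by
  unfold indInt; by_cases h : x ∈ Set.Ico ((i:ℝ) * 2 ^ k) (((i:ℝ)+1) * 2 ^ k)
  · rw [Set.indicator_of_mem h]; norm_num
  · rw [Set.indicator_of_notMem h]; norm_num

lemma abs_haarInt_le (k i : ℤ) (x : ℝ) : |haarInt k i x| ≤ 1 := by
  rw [haarInt_eq_sub]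
  have h1 : indInt (k-1) (2*i) x = 0 ∨ indInt (k-1) (2*i+1) x = 0 := by
    by_cases h : x ∈ dI (k-1) (2*i)
    · right; apply indInt_eq_zero_of_not_mem
      rcases h with ⟨ha, hb⟩
      rw [dI, Set.mem_Ico]; push_cast; push_cast at ha hb
      rintro ⟨h1, _⟩; linarith
    · left; exact indInt_eq_zero_of_not_mem h
  rcases h1 with h | h
  · rw [h, zero_sub, abs_neg]; exact abs_indInt_le _ _ _
  · rw [h, sub_zero]; exact abs_indInt_le _ _ _

lemma dI_nonempty (k i : ℤ) : ((i:ℝ) * 2 ^ k) ∈ dI k i := by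
  rw [dI, Set.mem_Ico]
  exact ⟨le_refl _, by nlinarith [two_zpow_pos k]⟩

lemma indInt_of_mem {k i : ℤ} {x : ℝ} (h : x ∈ dI k i) : indInt k i x = 1 :=
  Set.indicator_of_mem h _

/-- dyadic nesting: smaller-scale interval is inside or disjoint from bigger one -/
lemma dI_subset_or_disjoint {k' k i' i : ℤ} (h : k' ≤ k) :
    dI k' i' ⊆ dI k i ∨ (∀ x, x ∈ dI k' i' → x ∉ dI k i) := by
  set m : ℤ := (2:ℤ) ^ (k - k').toNat with hmdef
  have hm : (2:ℝ) ^ k = 2 ^ k' * (m:ℝ) := by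
    have h1 : (m:ℝ) = (2:ℝ) ^ ((k - k' : ℤ)) := by
      rw [hmdef]; push_cast
      rw [← zpow_natCast (2:ℝ) (k - k').toNat, Int.toNat_of_nonneg (by omega)]
    rw [h1, ← zpow_add₀ (by norm_num : (2:ℝ) ≠ 0)]; ring_nf
  have hpos' := two_zpow_pos k'
  by_cases hc : i * m ≤ i' ∧ i' + 1 ≤ (i+1) * m
  · left
    rintro x ⟨h1, h2⟩
    have c1 : ((i * m : ℤ) : ℝ) ≤ (i' : ℝ) := by exact_mod_cast hc.1
    have c2 : ((i' : ℝ) + 1) ≤ (((i+1) * m : ℤ) : ℝ) := by exact_mod_cast hc.2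
    push_cast at c1 c2
    rw [dI, Set.mem_Ico]
    constructor
    · calc (i:ℝ) * 2 ^ k = (i * m) * 2 ^ k' := by rw [hm]; ring
        _ ≤ (i':ℝ) * 2 ^ k' := by nlinarith
        _ ≤ x := h1
    · calc x < ((i':ℝ)+1) * 2 ^ k' := h2
        _ ≤ ((i:ℝ)+1) * m * 2 ^ k' := by nlinarith
        _ = ((i:ℝ)+1) * 2 ^ k := by rw [hm]; ring
  · right
    rintro x ⟨h1, h2⟩ ⟨g1, g2⟩
    rw [not_and_or] at hc
    rcases hc with hc | hc
    · push_neg at hc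
      have : i' + 1 ≤ i * m := Int.add_one_le_iff.mpr hc
      have c : ((i' : ℝ) + 1) ≤ ((i * m : ℤ) : ℝ) := by exact_mod_cast this
      push_cast at c
      have : x < (i:ℝ) * 2 ^ k := by
        calc x < ((i':ℝ)+1) * 2 ^ k' := h2
          _ ≤ (i:ℝ) * m * 2 ^ k' := by nlinarith
          _ = (i:ℝ) * 2 ^ k := by rw [hm]; ring
      linarith
    · push_neg at hc
      have : (i+1) * m ≤ i' := by
        have := Int.lt_add_one_iff.mp hc
        linarith
      have c : (((i+1) * m : ℤ) : ℝ) ≤ (i' : ℝ) := by exact_mod_cast this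
      push_cast at c
      have : ((i:ℝ)+1) * 2 ^ k ≤ x := by
        calc ((i:ℝ)+1) * 2 ^ k = ((i:ℝ)+1) * m * 2 ^ k' := by rw [hm]; ring
          _ ≤ (i':ℝ) * 2 ^ k' := by nlinarith
          _ ≤ x := h1
      linarith

lemma dI_disjoint_same {k i i' : ℤ} (h : i ≠ i') (x : ℝ) :
    x ∈ dI k i → x ∉ dI k i' := by
  rintro ⟨h1, h2⟩ ⟨g1, g2⟩
  have hpos := two_zpow_pos k
  rcases lt_or_gt_of_ne h with hlt | hlt
  · have : (i:ℝ) + 1 ≤ (i':ℝ) := by exact_mod_cast hlt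
    nlinarith
  · have : (i':ℝ) + 1 ≤ (i:ℝ) := by exact_mod_cast hlt
    nlinarith

lemma dI_subset_same {k i i' : ℤ} (h : dI k i' ⊆ dI k i) : i' = i := by
  have := h (dI_nonempty k i')
  rw [dI, Set.mem_Ico] at this
  have hpos := two_zpow_pos k
  rcases this with ⟨h1, h2⟩
  have e1 : (i:ℝ) ≤ i' := by nlinarith
  have e2 : (i':ℝ) < i + 1 := by nlinarith
  have : (i:ℤ) ≤ i' := by exact_mod_cast e1
  have : (i':ℤ) < i + 1 := by exact_mod_cast e2
  omega

lemma indInt_const_on {k' k i' i : ℤ} (h : k' ≤ k) :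
    ∃ c : ℝ, ∀ x ∈ dI k' i', indInt k i x = c := by
  rcases dI_subset_or_disjoint (i' := i') (i := i) h with hs | hd
  · exact ⟨1, fun x hx => Set.indicator_of_mem (hs hx) _⟩
  · exact ⟨0, fun x hx => indInt_eq_zero_of_not_mem (hd x hx)⟩

lemma haarInt_const_on {k' k i' i : ℤ} (h : k' ≤ k - 1) :
    ∃ c : ℝ, ∀ x ∈ dI k' i', haarInt k i x = c := by
  obtain ⟨c1, hc1⟩ := indInt_const_on (k := k-1) (i' := i') (i := 2*i) h
  obtain ⟨c2, hc2⟩ := indInt_const_on (k := k-1) (i' := i') (i := 2*i+1) h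
  exact ⟨c1 - c2, fun x hx => by rw [haarInt_eq_sub, hc1 x hx, hc2 x hx]⟩

lemma dI_split (k i : ℤ) (x : ℝ) :
    x ∈ dI k i ↔ (x ∈ dI (k-1) (2*i) ∨ x ∈ dI (k-1) (2*i+1)) := by
  have hk := two_zpow_succ k
  have hpos := two_zpow_pos (k-1)
  have hik : (i:ℝ) * 2 ^ k = 2*(i:ℝ) * 2 ^ (k-1) := by rw [hk]; ring
  rw [dI, dI, dI, Set.mem_Ico, Set.mem_Ico, Set.mem_Ico]
  push_cast
  constructor
  · rintro ⟨h1, h2⟩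
    by_cases hx : x < (2*(i:ℝ)+1) * 2 ^ (k-1)
    · left; constructor <;> linarith [hik, hk]
    · right; push_neg at hx; constructor <;> linarith [hik, hk]
  · rintro (⟨h1, h2⟩ | ⟨h1, h2⟩) <;> constructor <;> nlinarith [hik, hk]

lemma haarInt_on_left {k i : ℤ} {x : ℝ} (h : x ∈ dI (k-1) (2*i)) : haarInt k i x = 1 := by
  rw [haarInt_eq_sub, indInt_of_mem h, indInt_eq_zero_of_not_mem, sub_zero]
  exact dI_disjoint_same (by omega) x h

lemma haarInt_on_right {k i : ℤ} {x : ℝ} (h : x ∈ dI (k-1) (2*i+1)) : haarInt k i x = -1 := by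
  rw [haarInt_eq_sub, indInt_of_mem h, indInt_eq_zero_of_not_mem]
  · norm_num
  · exact dI_disjoint_same (by omega) x h

lemma dI_subset_half {k' k i' i : ℤ} (h : k' ≤ k - 1) (hsub : dI k' i' ⊆ dI k i) :
    dI k' i' ⊆ dI (k-1) (2*i) ∨ dI k' i' ⊆ dI (k-1) (2*i+1) := by
  rcases dI_subset_or_disjoint (i' := i') (i := 2*i) h with hs | hd
  · exact Or.inl hs
  rcases dI_subset_or_disjoint (i' := i') (i := 2*i+1) h with hs | hd'
  · exact Or.inr hs
  exfalso
  have hx := dI_nonempty k' i'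
  have := hsub hx
  rw [dI_split] at this
  rcases this with h' | h'
  · exact hd _ hx h'
  · exact hd' _ hx h'

/-- single factor of a Haar cube function -/
def hcF (n : ℕ) (ε : Fin n → Bool) (Q : DyadicCube n) (t : Fin n) : ℝ → ℝ :=
  if ε t then haarInt Q.1 (Q.2 t) else indInt Q.1 (Q.2 t)

lemma haarCube_eq_prod (n : ℕ) (ε : Fin n → Bool) (Q : DyadicCube n) (x : Fin n → ℝ) :
    haarCube n ε Q x = ∏ t, hcF n ε Q t (x t) := by
  unfold haarCube hcF
  exact Finset.prod_congr rfl fun t _ => by split <;> rfl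

lemma integrable_hcF (n : ℕ) (ε : Fin n → Bool) (Q : DyadicCube n) (t : Fin n) :
    Integrable (hcF n ε Q t) := by
  unfold hcF; split
  · exact integrable_haarInt _ _
  · exact integrable_indInt _ _

lemma measurable_hcF (n : ℕ) (ε : Fin n → Bool) (Q : DyadicCube n) (t : Fin n) :
    Measurable (hcF n ε Q t) := by
  unfold hcF; split
  · exact measurable_haarInt _ _
  · exact measurable_indInt _ _

lemma abs_hcF_le (n : ℕ) (ε : Fin n → Bool) (Q : DyadicCube n) (t : Fin n) (y : ℝ) :
    |hcF n ε Q t y| ≤ 1 := by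
  unfold hcF; split
  · exact abs_haarInt_le _ _ _
  · exact abs_indInt_le _ _ _

lemma hcF_eq_zero {n : ℕ} {ε : Fin n → Bool} {Q : DyadicCube n} {t : Fin n} {y : ℝ}
    (h : y ∉ dI Q.1 (Q.2 t)) : hcF n ε Q t y = 0 := by
  unfold hcF; split
  · exact haarInt_eq_zero_of_not_mem h
  · exact indInt_eq_zero_of_not_mem h

lemma mem_cubeSet_iff {n : ℕ} {Q : DyadicCube n} {x : Fin n → ℝ} :
    x ∈ cubeSet n Q ↔ ∀ t, x t ∈ dI Q.1 (Q.2 t) := by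
  rw [cubeSet, Set.mem_univ_pi]; rfl

lemma haarCube_eq_zero_of_not_mem {n : ℕ} {ε : Fin n → Bool} {Q : DyadicCube n}
    {x : Fin n → ℝ} (h : x ∉ cubeSet n Q) : haarCube n ε Q x = 0 := by
  rw [haarCube_eq_prod]
  rw [mem_cubeSet_iff] at h
  push_neg at h
  obtain ⟨t, ht⟩ := h
  exact Finset.prod_eq_zero (Finset.mem_univ t) (hcF_eq_zero ht)

lemma integrable_haarCube (n : ℕ) (ε : Fin n → Bool) (Q : DyadicCube n) :
    Integrable (haarCube n ε Q) := by
  have : haarCube n ε Q = fun x => ∏ t, hcF n ε Q t (x t) := funext (haarCube_eq_prod n ε Q)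
  rw [this]
  exact Integrable.fintype_prod (fun t => integrable_hcF n ε Q t)

lemma integral_haarCube_eq_zero {n : ℕ} {ε : Fin n → Bool} (Q : DyadicCube n)
    {j : Fin n} (hj : ε j = true) : ∫ x, haarCube n ε Q x = 0 := by
  have : (fun x : Fin n → ℝ => haarCube n ε Q x) = fun x => ∏ t, hcF n ε Q t (x t) :=
    funext (haarCube_eq_prod n ε Q)
  rw [this, integral_fintype_prod_volume_eq_prod (ι := Fin n) (fun t => hcF n ε Q t)]
  apply Finset.prod_eq_zero (Finset.mem_univ j)
  unfold hcF
  rw [hj]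
  simp only [if_true]
  exact integral_haarInt _ _

lemma integrable_haarCube_mul (n : ℕ) (ε ε' : Fin n → Bool) (Q Q' : DyadicCube n) :
    Integrable (fun x => haarCube n ε' Q' x * haarCube n ε Q x) := by
  have : (fun x : Fin n → ℝ => haarCube n ε' Q' x * haarCube n ε Q x)
      = fun x => ∏ t, (hcF n ε' Q' t (x t) * hcF n ε Q t (x t)) := by
    funext x
    rw [haarCube_eq_prod, haarCube_eq_prod, ← Finset.prod_mul_distrib]
  rw [this]
  apply Integrable.fintype_prod (f := fun t y => hcF n ε' Q' t y * hcF n ε Q t y)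
  intro t
  apply Integrable.bdd_mul (c := 1) (integrable_hcF n ε Q t)
    (measurable_hcF n ε' Q' t).aestronglyMeasurable
  exact Filter.Eventually.of_forall (fun y => by rw [Real.norm_eq_abs]; exact abs_hcF_le _ _ _ _ _)

/-- Vanishing: strictly smaller cube `Q'` with a Haar direction against any bigger cube. -/
lemma integral_haarCube_mul_eq_zero_of_lt {n : ℕ} {ε ε' : Fin n → Bool} {Q Q' : DyadicCube n}
    (hlt : Q'.1 < Q.1) {j : Fin n} (hj : ε' j = true) :
    ∫ x, haarCube n ε' Q' x * haarCube n ε Q x = 0 := by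
  have hconst : ∀ t, ∃ c : ℝ, ∀ y ∈ dI Q'.1 (Q'.2 t), hcF n ε Q t y = c := by
    intro t
    unfold hcF; split
    · exact haarInt_const_on (by omega)
    · exact indInt_const_on (by omega)
  choose c hc using hconst
  have key : ∀ x, haarCube n ε' Q' x * haarCube n ε Q x = (∏ t, c t) * haarCube n ε' Q' x := by
    intro x
    by_cases hx : x ∈ cubeSet n Q'
    · rw [mem_cubeSet_iff] at hx
      have : haarCube n ε Q x = ∏ t, c t := by
        rw [haarCube_eq_prod]
        exact Finset.prod_congr rfl fun t _ => hc t (x t) (hx t)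
      rw [this]; ring
    · rw [haarCube_eq_zero_of_not_mem hx]; ring
  rw [funext key, integral_const_mul, integral_haarCube_eq_zero Q' hj, mul_zero]

/-- Vanishing: same scale, different position. -/
lemma integral_haarCube_mul_eq_zero_of_ne {n : ℕ} {ε ε' : Fin n → Bool} {Q Q' : DyadicCube n}
    (hk : Q'.1 = Q.1) {t0 : Fin n} (hne : Q'.2 t0 ≠ Q.2 t0) :
    ∫ x, haarCube n ε' Q' x * haarCube n ε Q x = 0 := by
  have key : ∀ x, haarCube n ε' Q' x * haarCube n ε Q x = 0 := by
    intro x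
    by_cases hx : x t0 ∈ dI Q'.1 (Q'.2 t0)
    · have : x t0 ∉ dI Q.1 (Q.2 t0) := by
        rw [← hk]; exact dI_disjoint_same hne _ hx
      rw [haarCube_eq_prod n ε Q, Finset.prod_eq_zero (Finset.mem_univ t0) (hcF_eq_zero this),
        mul_zero]
    · rw [haarCube_eq_prod n ε' Q', Finset.prod_eq_zero (Finset.mem_univ t0) (hcF_eq_zero hx),
        zero_mul]
  rw [funext key]
  exact integral_zero _ _

lemma measurable_haarCube (n : ℕ) (ε : Fin n → Bool) (Q : DyadicCube n) :
    Measurable (haarCube n ε Q) := by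
  have : haarCube n ε Q = fun x => ∏ t, hcF n ε Q t (x t) := funext (haarCube_eq_prod n ε Q)
  rw [this]
  exact Finset.measurable_prod _ (fun t _ => (measurable_hcF n ε Q t).comp (measurable_pi_apply t))

lemma measurableSet_cubeSet (n : ℕ) (Q : DyadicCube n) : MeasurableSet (cubeSet n Q) :=
  MeasurableSet.univ_pi fun t => measurableSet_Ico

lemma setIntegral_haarCube_eq_zero {n : ℕ} {ε : Fin n → Bool} {Q : DyadicCube n}
    {s : Set (Fin n → ℝ)} (hsub : cubeSet n Q ⊆ s) {j : Fin n} (hj : ε j = true) :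
    ∫ x in s, haarCube n ε Q x = 0 := by
  rw [setIntegral_eq_integral_of_forall_compl_eq_zero
    (fun x hx => haarCube_eq_zero_of_not_mem (fun hmem => hx (hsub hmem)))]
  exact integral_haarCube_eq_zero Q hj

lemma integrableOn_haarCube (n : ℕ) (ε : Fin n → Bool) (Q : DyadicCube n)
    (s : Set (Fin n → ℝ)) : IntegrableOn (haarCube n ε Q) s :=
  (integrable_haarCube n ε Q).integrableOn

lemma sepConvex_midpoint {n : ℕ} {f : (Fin n → ℝ) → ℝ} (hf : SeparatelyConvex n f)
    (i : Fin n) (a : Fin n → ℝ) (c : ℝ) :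
    2 * f a ≤ f (Function.update a i (a i + c)) + f (Function.update a i (a i - c)) := by
  have h := (hf i a).2 (Set.mem_univ (a i + c)) (Set.mem_univ (a i - c))
    (by norm_num : (0:ℝ) ≤ 1/2) (by norm_num : (0:ℝ) ≤ 1/2) (by norm_num : (1:ℝ)/2 + 1/2 = 1)
  simp only [smul_eq_mul] at h
  have e : (1/2 : ℝ) * (a i + c) + (1/2 : ℝ) * (a i - c) = a i := by ring
  rw [e, Function.update_eq_self] at h
  linarith

/-- corner point -/
def cpt {n : ℕ} (c : Fin n → ℝ) (s : Finset (Fin n)) (σ : Fin n → Bool) (a : Fin n → ℝ) :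
    Fin n → ℝ :=
  fun j => a j + (if j ∈ s then (if σ j then -1 else 1) * c j else 0)

lemma cpt_congr {n : ℕ} (c : Fin n → ℝ) (s : Finset (Fin n)) {σ σ' : Fin n → Bool}
    (a : Fin n → ℝ) (h : ∀ j ∈ s, σ j = σ' j) : cpt c s σ a = cpt c s σ' a := by
  funext j
  unfold cpt
  by_cases hj : j ∈ s
  · rw [if_pos hj, if_pos hj, h j hj]
  · rw [if_neg hj, if_neg hj]

lemma corner_ineq_aux {n : ℕ} {f : (Fin n → ℝ) → ℝ} (hf : SeparatelyConvex n f) (c : Fin n → ℝ) :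
    ∀ (s : Finset (Fin n)) (a : Fin n → ℝ),
      (2:ℝ) ^ n * f a ≤ ∑ σ : Fin n → Bool, f (cpt c s σ a) := by
  intro s
  induction s using Finset.induction_on with
  | empty =>
      intro a
      have : ∀ σ : Fin n → Bool, cpt c ∅ σ a = a := by
        intro σ; funext j; simp [cpt]
      simp only [this, Finset.sum_const, Finset.card_univ]
      rw [Fintype.card_fun, Fintype.card_bool, Fintype.card_fin]
      rw [nsmul_eq_mul]
      push_cast
      ring_nf
      exact le_refl _
  | @insert i s hi ih =>
      intro a
      set aT : Fin n → ℝ := Function.update a i (a i - c i) with haT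
      set aF : Fin n → ℝ := Function.update a i (a i + c i) with haF
      have claim1 : ∀ σ : Fin n → Bool,
          cpt c (insert i s) σ a = cpt c s σ (if σ i then aT else aF) := by
        intro σ
        funext j
        unfold cpt
        by_cases hj : j = i
        · subst hj
          rw [if_pos (Finset.mem_insert_self j s), if_neg hi]
          cases hσ : σ j <;>
            simp [hσ, haT, haF, Function.update_self] <;> ring
        · have hmem : j ∈ insert i s ↔ j ∈ s := by
            rw [Finset.mem_insert]; exact ⟨fun h => h.resolve_left hj, Or.inr⟩
          by_cases hjs : j ∈ s
          · rw [if_pos (hmem.mpr hjs), if_pos hjs]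
            cases σ i <;> simp [haT, haF, Function.update_of_ne hj]
          · rw [if_neg (fun h => hjs (hmem.mp h)), if_neg hjs]
            cases σ i <;> simp [haT, haF, Function.update_of_ne hj]
      have claim2 : ∑ σ : Fin n → Bool, f (cpt c s σ (if σ i then aT else aF))
          = ∑ σ : Fin n → Bool, f (cpt c s σ (if σ i then aF else aT)) := by
        have hinv : Function.Involutive
            (fun σ : Fin n → Bool => Function.update σ i (!σ i)) := by
          intro σ; funext j; by_cases hj : j = i
          · subst hj; simp
          · simp [Function.update_of_ne hj]
        apply Fintype.sum_bijective _ hinv.bijective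
        intro σ
        have h1 : Function.update σ i (!σ i) i = !σ i := Function.update_self _ _ _
        rw [h1]
        have h2 : cpt c s (Function.update σ i (!σ i)) (if !σ i then aF else aT)
            = cpt c s σ (if !σ i then aF else aT) := by
          apply cpt_congr
          intro j hj
          exact Function.update_of_ne (fun h => hi (by rw [← h]; exact hj)) _ _
        rw [h2]
        cases hσ : σ i <;> simp [hσ]
      have key : 2 * ∑ σ : Fin n → Bool, f (cpt c s σ (if σ i then aT else aF))
          = ∑ σ : Fin n → Bool, (f (cpt c s σ aT) + f (cpt c s σ aF)) := by
        rw [two_mul]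
        nth_rewrite 2 [claim2]
        rw [← Finset.sum_add_distrib]
        apply Finset.sum_congr rfl
        intro σ _
        cases hσ : σ i <;> simp [hσ] <;> ring
      simp only [claim1]
      have h1 := ih aT
      have h2 := ih aF
      have h3 := sepConvex_midpoint hf i a (c i)
      have h4 : 2 * ((2:ℝ) ^ n * f a) ≤ 2 * ∑ σ : Fin n → Bool, f (cpt c s σ (if σ i then aT else aF)) := by
        rw [key]
        rw [Finset.sum_add_distrib]
        calc 2 * ((2:ℝ) ^ n * f a) = (2:ℝ)^n * (2 * f a) := by ring
          _ ≤ (2:ℝ)^n * (f aF + f aT) := by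
              apply mul_le_mul_of_nonneg_left _ (by positivity)
              rw [haF, haT]; linarith
          _ = (2:ℝ)^n * f aT + (2:ℝ)^n * f aF := by ring
          _ ≤ _ := add_le_add h1 h2
      linarith

lemma corner_ineq {n : ℕ} {f : (Fin n → ℝ) → ℝ} (hf : SeparatelyConvex n f)
    (c : Fin n → ℝ) (a : Fin n → ℝ) :
    (2:ℝ) ^ n * f a ≤ ∑ σ : Fin n → Bool,
      f (fun j => a j + (if σ j then -1 else 1) * c j) := by
  have h := corner_ineq_aux hf c Finset.univ a
  have e : ∀ σ : Fin n → Bool, cpt c Finset.univ σ a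
      = fun j => a j + (if σ j then -1 else 1) * c j := by
    intro σ; funext j; simp [cpt]
  simp only [e] at h
  exact h

def child {n : ℕ} (B : DyadicCube n) (σ : Fin n → Bool) : DyadicCube n :=
  (B.1 - 1, fun t => 2 * B.2 t + (if σ t then 1 else 0))

lemma mem_child_iff {n : ℕ} {B : DyadicCube n} {σ : Fin n → Bool} {x : Fin n → ℝ} :
    x ∈ cubeSet n (child B σ) ↔
      ∀ t, x t ∈ dI (B.1 - 1) (2 * B.2 t + (if σ t then 1 else 0)) :=
  mem_cubeSet_iff

lemma child_half_subset {n : ℕ} (B : DyadicCube n) (σ : Fin n → Bool) (t : Fin n) {y : ℝ}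
    (h : y ∈ dI (B.1 - 1) (2 * B.2 t + (if σ t then 1 else 0))) : y ∈ dI B.1 (B.2 t) := by
  rw [dI_split]
  cases hσ : σ t
  · left; rw [hσ] at h; simpa using h
  · right; rw [hσ] at h; simpa using h

lemma cubeSet_eq_union {n : ℕ} (B : DyadicCube n) :
    cubeSet n B = ⋃ σ ∈ (Finset.univ : Finset (Fin n → Bool)), cubeSet n (child B σ) := by
  classical
  ext x
  simp only [Set.mem_iUnion, Finset.mem_univ, exists_prop, true_and]
  constructor
  · intro hx
    rw [mem_cubeSet_iff] at hx
    refine ⟨fun t => if x t ∈ dI (B.1 - 1) (2 * B.2 t + 1) then true else false, ?_⟩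
    rw [mem_child_iff]
    intro t
    by_cases ht : x t ∈ dI (B.1 - 1) (2 * B.2 t + 1)
    · rw [if_pos ht, if_pos rfl]; exact ht
    · rw [if_neg ht, if_neg (by simp)]
      have := (dI_split B.1 (B.2 t) (x t)).mp (hx t)
      rcases this with h | h
      · simpa using h
      · exact absurd h ht
  · rintro ⟨σ, hσ⟩
    rw [mem_child_iff] at hσ
    rw [mem_cubeSet_iff]
    exact fun t => child_half_subset B σ t (hσ t)

lemma child_disjoint {n : ℕ} (B : DyadicCube n) {σ σ' : Fin n → Bool} (h : σ ≠ σ') :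
    Disjoint (cubeSet n (child B σ)) (cubeSet n (child B σ')) := by
  rw [Set.disjoint_left]
  intro x hx hx'
  obtain ⟨t, ht⟩ : ∃ t, σ t ≠ σ' t := by
    by_contra hc; push_neg at hc; exact h (funext hc)
  rw [mem_child_iff] at hx hx'
  have h1 := hx t
  have h2 := hx' t
  have hne : 2 * B.2 t + (if σ t then 1 else 0) ≠ 2 * B.2 t + (if σ' t then 1 else 0) := by
    cases hσ : σ t <;> cases hσ' : σ' t <;> simp_all
  exact dI_disjoint_same hne _ h1 h2

lemma stdDir_self (n : ℕ) (j : Fin n) : stdDir n j j = true := by simp [stdDir]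

lemma haarCube_stdDir_on_child {n : ℕ} {B : DyadicCube n} {σ : Fin n → Bool} {j : Fin n}
    {x : Fin n → ℝ} (hx : x ∈ cubeSet n (child B σ)) :
    haarCube n (stdDir n j) B x = (if σ j then -1 else 1) := by
  rw [mem_child_iff] at hx
  rw [haarCube_eq_prod]
  rw [Finset.prod_eq_single j]
  · have hj : hcF n (stdDir n j) B j = haarInt B.1 (B.2 j) := by
      unfold hcF stdDir; simp
    rw [hj]
    cases hσ : σ j
    · have := hx j; rw [hσ] at this; simp only [if_neg Bool.false_ne_true] at this ⊢
      exact haarInt_on_left (by simpa using this)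
    · have := hx j; rw [hσ] at this; simp only [if_pos rfl] at this ⊢
      exact haarInt_on_right (by simpa using this)
  · intro t _ htj
    have ht : hcF n (stdDir n j) B t = indInt B.1 (B.2 t) := by
      unfold hcF stdDir; simp [htj]
    rw [ht]
    exact indInt_of_mem (child_half_subset B σ t (hx t))
  · intro h; exact absurd (Finset.mem_univ j) h

lemma cubeSet_subset_coords {n : ℕ} {Q B : DyadicCube n}
    (h : cubeSet n Q ⊆ cubeSet n B) (t : Fin n) : dI Q.1 (Q.2 t) ⊆ dI B.1 (B.2 t) := by
  intro y hy
  classical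
  set x : Fin n → ℝ := fun s => if s = t then y else (Q.2 s : ℝ) * 2 ^ Q.1 with hx
  have hxQ : x ∈ cubeSet n Q := by
    rw [mem_cubeSet_iff]
    intro s
    by_cases hs : s = t
    · subst hs; simp only [hx, if_pos rfl]; exact hy
    · simp only [hx, if_neg hs]; exact dI_nonempty _ _
  have := h hxQ
  rw [mem_cubeSet_iff] at this
  have := this t
  simpa [hx] using this

lemma subset_child {n : ℕ} {Q B : DyadicCube n} (hk : Q.1 ≤ B.1 - 1)
    (h : cubeSet n Q ⊆ cubeSet n B) : ∃ σ, cubeSet n Q ⊆ cubeSet n (child B σ) := by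
  have hc : ∀ t, ∃ e : Bool, dI Q.1 (Q.2 t) ⊆ dI (B.1-1) (2 * B.2 t + (if e then 1 else 0)) := by
    intro t
    rcases dI_subset_half hk (cubeSet_subset_coords h t) with hs | hs
    · exact ⟨false, by simpa using hs⟩
    · exact ⟨true, by simpa using hs⟩
  choose σ hσ using hc
  refine ⟨σ, fun x hx => ?_⟩
  rw [mem_cubeSet_iff] at hx
  rw [mem_child_iff]
  exact fun t => hσ t (hx t)

lemma eq_of_same_scale_subset {n : ℕ} {Q B : DyadicCube n} (hk : Q.1 = B.1)
    (h : cubeSet n Q ⊆ cubeSet n B) : Q = B := by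
  have : ∀ t, Q.2 t = B.2 t := by
    intro t
    have := cubeSet_subset_coords h t
    rw [hk] at this
    exact dI_subset_same this
  exact Prod.ext hk (funext this)

lemma volume_cubeSet (n : ℕ) (B : DyadicCube n) :
    volume (cubeSet n B) = (ENNReal.ofReal ((2:ℝ) ^ B.1)) ^ n := by
  rw [cubeSet, volume_pi_pi]
  have : ∀ t : Fin n, volume (Set.Ico ((B.2 t : ℝ) * 2 ^ B.1) (((B.2 t : ℝ) + 1) * 2 ^ B.1))
      = ENNReal.ofReal ((2:ℝ) ^ B.1) := by
    intro t
    rw [Real.volume_Ico]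
    congr 1
    ring
  rw [Finset.prod_congr rfl (fun t _ => this t), Finset.prod_const, Finset.card_univ,
    Fintype.card_fin]

lemma volume_cubeSet_ne_top (n : ℕ) (B : DyadicCube n) : volume (cubeSet n B) ≠ ⊤ := by
  rw [volume_cubeSet]
  exact (ENNReal.pow_lt_top ENNReal.ofReal_lt_top).ne

lemma volume_cubeSet_toReal (n : ℕ) (B : DyadicCube n) :
    (volume (cubeSet n B)).toReal = cubeVol n B := by
  rw [volume_cubeSet, ENNReal.toReal_pow, ENNReal.toReal_ofReal (two_zpow_pos B.1).le, cubeVol]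
  rw [← zpow_natCast ((2:ℝ) ^ B.1) n, ← zpow_mul]

lemma cubeVol_pos (n : ℕ) (B : DyadicCube n) : 0 < cubeVol n B := two_zpow_pos _

lemma cubeVol_child (n : ℕ) (B : DyadicCube n) (σ : Fin n → Bool) :
    cubeVol n B = 2 ^ n * cubeVol n (child B σ) := by
  unfold cubeVol child
  rw [← zpow_natCast (2:ℝ) n, ← zpow_add₀ (by norm_num : (2:ℝ) ≠ 0)]
  congr 1
  ring

open scoped Classical in
/-- On a child cube, the Haar expansion regroups into constant + finer cubes. -/
lemma w_eq_on_child {n : ℕ} {B : DyadicCube n} {a : Fin n → ℝ}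
    {G : Fin n → Finset (DyadicCube n)} {b : Fin n → DyadicCube n → ℝ}
    (hG : ∀ j, ∀ Q ∈ G j, cubeSet n Q ⊆ cubeSet n B ∧ Q.1 ≤ B.1)
    (σ : Fin n → Bool) {x : Fin n → ℝ} (hx : x ∈ cubeSet n (child B σ)) (j : Fin n) :
    a j + ∑ Q ∈ G j, b j Q * haarCube n (stdDir n j) Q x
      = (a j + (if σ j then -1 else 1) * ∑ Q ∈ (G j).filter (fun Q => Q.1 = B.1), b j Q)
        + ∑ Q ∈ (G j).filter (fun Q => Q.1 ≠ B.1 ∧ cubeSet n Q ⊆ cubeSet n (child B σ)),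
            b j Q * haarCube n (stdDir n j) Q x := by
  have hsplit := Finset.sum_filter_add_sum_filter_not (G j) (fun Q => Q.1 = B.1)
    (fun Q => b j Q * haarCube n (stdDir n j) Q x)
  rw [← hsplit]
  have h1 : ∑ Q ∈ (G j).filter (fun Q => Q.1 = B.1), b j Q * haarCube n (stdDir n j) Q x
      = (if σ j then -1 else 1) * ∑ Q ∈ (G j).filter (fun Q => Q.1 = B.1), b j Q := by
    rw [Finset.mul_sum]
    apply Finset.sum_congr rfl
    intro Q hQ
    rw [Finset.mem_filter] at hQ
    have hQB : Q = B := eq_of_same_scale_subset hQ.2 (hG j Q hQ.1).1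
    rw [hQB, haarCube_stdDir_on_child hx]
    ring
  have h2 : ∑ Q ∈ (G j).filter (fun Q => Q.1 ≠ B.1 ∧ cubeSet n Q ⊆ cubeSet n (child B σ)),
        b j Q * haarCube n (stdDir n j) Q x
      = ∑ Q ∈ (G j).filter (fun Q => ¬ Q.1 = B.1), b j Q * haarCube n (stdDir n j) Q x := by
    rw [← Finset.filter_filter]
    apply Finset.sum_filter_of_ne
    intro Q hQ hne
    rw [Finset.mem_filter] at hQ
    have hle : Q.1 ≤ B.1 - 1 := by
      have := (hG j Q hQ.1).2
      omega
    obtain ⟨σ', hσ'⟩ := subset_child hle (hG j Q hQ.1).1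
    by_cases hss : σ' = σ
    · rw [← hss]; exact hσ'
    · exfalso
      apply hne
      have hxQ : x ∉ cubeSet n Q := by
        intro hmem
        exact Set.disjoint_left.mp (child_disjoint B hss) (hσ' hmem) hx
      rw [haarCube_eq_zero_of_not_mem hxQ, mul_zero]
  rw [h1, h2]
  ring

open scoped Classical in
lemma jensen_peel {n : ℕ} {f : (Fin n → ℝ) → ℝ}
    (B : DyadicCube n) (a : Fin n → ℝ) (G : Fin n → Finset (DyadicCube n))
    (b : Fin n → DyadicCube n → ℝ)
    (hf : SeparatelyConvex n f)
    (hchild : ∀ σ : Fin n → Bool,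
      IntegrableOn (fun x => f (fun j => a j + ∑ Q ∈ G j, b j Q * haarCube n (stdDir n j) Q x))
          (cubeSet n (child B σ)) volume ∧
        cubeVol n (child B σ) * f (fun j => a j + (if σ j then -1 else 1) *
            ∑ Q ∈ (G j).filter (fun Q => Q.1 = B.1), b j Q) ≤
          ∫ x in cubeSet n (child B σ),
            f (fun j => a j + ∑ Q ∈ G j, b j Q * haarCube n (stdDir n j) Q x)) :
    IntegrableOn (fun x => f (fun j => a j + ∑ Q ∈ G j, b j Q * haarCube n (stdDir n j) Q x))
        (cubeSet n B) volume ∧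
      cubeVol n B * f a ≤
        ∫ x in cubeSet n B,
          f (fun j => a j + ∑ Q ∈ G j, b j Q * haarCube n (stdDir n j) Q x) := by
  set F : (Fin n → ℝ) → ℝ :=
    fun x => f (fun j => a j + ∑ Q ∈ G j, b j Q * haarCube n (stdDir n j) Q x) with hF
  have hunion := cubeSet_eq_union B
  have hint : IntegrableOn F (cubeSet n B) volume := by
    rw [hunion]
    exact integrableOn_finset_iUnion.mpr (fun σ _ => (hchild σ).1)
  refine ⟨hint, ?_⟩
  have hsum : ∫ x in cubeSet n B, F x
      = ∑ σ : Fin n → Bool, ∫ x in cubeSet n (child B σ), F x := by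
    rw [hunion]
    exact integral_biUnion_finset Finset.univ
      (fun σ _ => measurableSet_cubeSet n (child B σ))
      (fun σ _ σ' _ hne => child_disjoint B hne)
      (fun σ _ => (hchild σ).1)
  rw [hsum]
  set c : Fin n → ℝ := fun j => ∑ Q ∈ (G j).filter (fun Q => Q.1 = B.1), b j Q with hc
  have hlower : ∀ σ : Fin n → Bool,
      (2:ℝ) ^ ((B.1 - 1) * (n:ℤ)) * f (fun j => a j + (if σ j then -1 else 1) * c j)
        ≤ ∫ x in cubeSet n (child B σ), F x := by
    intro σ
    have := (hchild σ).2
    exact this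
  calc cubeVol n B * f a = (2:ℝ) ^ ((B.1 - 1) * (n:ℤ)) * ((2:ℝ) ^ n * f a) := by
        rw [cubeVol_child n B (fun _ => true)]
        unfold cubeVol child
        ring
    _ ≤ (2:ℝ) ^ ((B.1 - 1) * (n:ℤ)) *
        ∑ σ : Fin n → Bool, f (fun j => a j + (if σ j then -1 else 1) * c j) := by
        apply mul_le_mul_of_nonneg_left (corner_ineq hf c a) (two_zpow_pos _).le
    _ = ∑ σ : Fin n → Bool,
        (2:ℝ) ^ ((B.1 - 1) * (n:ℤ)) * f (fun j => a j + (if σ j then -1 else 1) * c j) := by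
        rw [Finset.mul_sum]
    _ ≤ ∑ σ : Fin n → Bool, ∫ x in cubeSet n (child B σ), F x :=
        Finset.sum_le_sum (fun σ _ => hlower σ)

open scoped Classical in
lemma jensen_main {n : ℕ} {f : (Fin n → ℝ) → ℝ} (hf : SeparatelyConvex n f) :
    ∀ (d : ℕ) (B : DyadicCube n) (a : Fin n → ℝ) (G : Fin n → Finset (DyadicCube n))
      (b : Fin n → DyadicCube n → ℝ),
      (∀ j, ∀ Q ∈ G j, cubeSet n Q ⊆ cubeSet n B ∧ B.1 - d ≤ Q.1 ∧ Q.1 ≤ B.1) →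
      IntegrableOn
          (fun x => f (fun j => a j + ∑ Q ∈ G j, b j Q * haarCube n (stdDir n j) Q x))
          (cubeSet n B) volume ∧
        cubeVol n B * f a ≤
          ∫ x in cubeSet n B,
            f (fun j => a j + ∑ Q ∈ G j, b j Q * haarCube n (stdDir n j) Q x) := by
  intro d
  induction d with
  | zero =>
      intro B a G b hG
      have hG' : ∀ j, ∀ Q ∈ G j, cubeSet n Q ⊆ cubeSet n B ∧ Q.1 ≤ B.1 :=
        fun j Q hQ => ⟨(hG j Q hQ).1, (hG j Q hQ).2.2⟩
      apply jensen_peel B a G b hf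
      intro σ
      set aσ : Fin n → ℝ := fun j => a j + (if σ j then -1 else 1) *
          ∑ Q ∈ (G j).filter (fun Q => Q.1 = B.1), b j Q with haσ
      have heq : ∀ x ∈ cubeSet n (child B σ),
          (fun j => a j + ∑ Q ∈ G j, b j Q * haarCube n (stdDir n j) Q x) = aσ := by
        intro x hx
        funext j
        rw [w_eq_on_child hG' σ hx j]
        have : ∑ Q ∈ (G j).filter
            (fun Q => Q.1 ≠ B.1 ∧ cubeSet n Q ⊆ cubeSet n (child B σ)),
            b j Q * haarCube n (stdDir n j) Q x = 0 := by
          apply Finset.sum_eq_zero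
          intro Q hQ
          rw [Finset.mem_filter] at hQ
          exfalso
          have h1 := (hG j Q hQ.1).2.1
          have h2 := (hG j Q hQ.1).2.2
          have := hQ.2.1
          omega
        rw [this, add_zero, haσ]
      constructor
      · apply (integrableOn_const (C := f aσ)
          (volume_cubeSet_ne_top n (child B σ))).congr_fun
          (fun x hx => (congrArg f (heq x hx)).symm) (measurableSet_cubeSet n (child B σ))
      · have : ∫ x in cubeSet n (child B σ),
            f (fun j => a j + ∑ Q ∈ G j, b j Q * haarCube n (stdDir n j) Q x)
            = ∫ _x in cubeSet n (child B σ), f aσ := by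
          exact setIntegral_congr_fun (measurableSet_cubeSet n (child B σ))
            (fun x hx => congrArg f (heq x hx))
        rw [this, setIntegral_const, smul_eq_mul, measureReal_def, volume_cubeSet_toReal]
  | succ d ih =>
      intro B a G b hG
      have hG' : ∀ j, ∀ Q ∈ G j, cubeSet n Q ⊆ cubeSet n B ∧ Q.1 ≤ B.1 :=
        fun j Q hQ => ⟨(hG j Q hQ).1, (hG j Q hQ).2.2⟩
      apply jensen_peel B a G b hf
      intro σ
      set aσ : Fin n → ℝ := fun j => a j + (if σ j then -1 else 1) *
          ∑ Q ∈ (G j).filter (fun Q => Q.1 = B.1), b j Q with haσ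
      set Gσ : Fin n → Finset (DyadicCube n) := fun j => (G j).filter
          (fun Q => Q.1 ≠ B.1 ∧ cubeSet n Q ⊆ cubeSet n (child B σ)) with hGσ
      have hGQ : ∀ j, ∀ Q ∈ Gσ j, cubeSet n Q ⊆ cubeSet n (child B σ)
          ∧ (child B σ).1 - d ≤ Q.1 ∧ Q.1 ≤ (child B σ).1 := by
        intro j Q hQ
        rw [hGσ, Finset.mem_filter] at hQ
        refine ⟨hQ.2.2, ?_, ?_⟩
        · have := (hG j Q hQ.1).2.1
          show B.1 - 1 - d ≤ Q.1
          omega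
        · have h1 := (hG j Q hQ.1).2.2
          have := hQ.2.1
          show Q.1 ≤ B.1 - 1
          omega
      obtain ⟨hint, hineq⟩ := ih (child B σ) aσ Gσ b hGQ
      have heq : ∀ x ∈ cubeSet n (child B σ),
          (fun j => a j + ∑ Q ∈ G j, b j Q * haarCube n (stdDir n j) Q x)
          = (fun j => aσ j + ∑ Q ∈ Gσ j, b j Q * haarCube n (stdDir n j) Q x) := by
        intro x hx
        funext j
        rw [w_eq_on_child hG' σ hx j]
      constructor
      · exact hint.congr_fun (fun x hx => (congrArg f (heq x hx)).symm)
          (measurableSet_cubeSet n (child B σ))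
      · have : ∫ x in cubeSet n (child B σ),
            f (fun j => a j + ∑ Q ∈ G j, b j Q * haarCube n (stdDir n j) Q x)
            = ∫ x in cubeSet n (child B σ),
              f (fun j => aσ j + ∑ Q ∈ Gσ j, b j Q * haarCube n (stdDir n j) Q x) := by
          exact setIntegral_congr_fun (measurableSet_cubeSet n (child B σ))
            (fun x hx => congrArg f (heq x hx))
        rw [this]
        exact hineq

lemma exists_true_of_ne_false {n : ℕ} {ε : Fin n → Bool} (h : ε ≠ fun _ => false) :
    ∃ t, ε t = true := by
  by_contra hc
  push_neg at hc
  exact h (funext fun t => by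
    cases ht : ε t
    · rfl
    · exact absurd ht (hc t))

/-- The inner product of `v j` against `h_Q^{(e_j)}` vanishes for `Q` outside the cubes of `F`. -/
lemma coeff_vanish {n : ℕ} {F : Finset ((Fin n → Bool) × DyadicCube n)}
    {c : (Fin n → Bool) × DyadicCube n → ℝ}
    (hF : ∀ q ∈ F, q.1 ≠ fun _ => false) (j : Fin n) {Q : DyadicCube n}
    (hQ : Q ∉ F.image Prod.snd) :
    ∫ y, (∑ q ∈ F, c q * haarCube n q.1 q.2 y) * haarCube n (stdDir n j) Q y = 0 := by
  have hrw : (fun y => (∑ q ∈ F, c q * haarCube n q.1 q.2 y) * haarCube n (stdDir n j) Q y)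
      = fun y => ∑ q ∈ F, c q * (haarCube n q.1 q.2 y * haarCube n (stdDir n j) Q y) := by
    funext y
    rw [Finset.sum_mul]
    exact Finset.sum_congr rfl fun q _ => by ring
  rw [hrw, integral_finset_sum _ (fun q _ =>
    (integrable_haarCube_mul n (stdDir n j) q.1 Q q.2).const_mul (c q))]
  apply Finset.sum_eq_zero
  intro q hq
  rw [integral_const_mul]
  have hne : q.2 ≠ Q := fun h => hQ (Finset.mem_image.mpr ⟨q, hq, h⟩)
  rcases lt_trichotomy q.2.1 Q.1 with hlt | heq | hgt
  · obtain ⟨t, ht⟩ := exists_true_of_ne_false (hF q hq)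
    rw [integral_haarCube_mul_eq_zero_of_lt hlt ht, mul_zero]
  · have hpos : q.2.2 ≠ Q.2 := by
      intro h
      exact hne (Prod.ext heq h)
    obtain ⟨t0, ht0⟩ : ∃ t0, q.2.2 t0 ≠ Q.2 t0 := by
      by_contra hc
      push_neg at hc
      exact hpos (funext hc)
    rw [integral_haarCube_mul_eq_zero_of_ne heq ht0, mul_zero]
  · have hcomm : (fun y => haarCube n q.1 q.2 y * haarCube n (stdDir n j) Q y)
        = fun y => haarCube n (stdDir n j) Q y * haarCube n q.1 q.2 y := by
      funext y; ring
    rw [hcomm, integral_haarCube_mul_eq_zero_of_lt hgt (stdDir_self n j), mul_zero]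

/-- Reduction of the Haar projection to a finite sum. -/
lemma haarProj_eq_sum {n : ℕ} {F : Finset ((Fin n → Bool) × DyadicCube n)}
    {c : (Fin n → Bool) × DyadicCube n → ℝ}
    (hF : ∀ q ∈ F, q.1 ≠ fun _ => false) (j : Fin n)
    {u : (Fin n → ℝ) → ℝ} (hu : u = fun x => ∑ q ∈ F, c q * haarCube n q.1 q.2 x)
    (x : Fin n → ℝ) :
    haarProj n (stdDir n j) u x
      = ∑ Q ∈ F.image Prod.snd,
          ((∫ y, u y * haarCube n (stdDir n j) Q y) / cubeVol n Q)
            * haarCube n (stdDir n j) Q x := by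
  unfold haarProj
  rw [tsum_eq_sum (s := F.image Prod.snd) ?_]
  · exact Finset.sum_congr rfl fun Q _ => by ring
  · intro Q hQ
    rw [hu]
    rw [coeff_vanish hF j hQ, zero_mul, zero_div]

def B0 (n : ℕ) : DyadicCube n := ((0:ℤ), fun _ => (0:ℤ))

lemma dI_B0 : dI (0:ℤ) (0:ℤ) = Set.Ico (0:ℝ) 1 := by
  rw [dI]; norm_num

lemma mem_B0_iff {n : ℕ} {x : Fin n → ℝ} :
    x ∈ cubeSet n (B0 n) ↔ ∀ t, x t ∈ Set.Ico (0:ℝ) 1 := by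
  rw [mem_cubeSet_iff]
  constructor <;> intro h t <;> have := h t
  · rwa [show dI ((B0 n).1) ((B0 n).2 t) = Set.Ico (0:ℝ) 1 from dI_B0] at this
  · rwa [show dI ((B0 n).1) ((B0 n).2 t) = Set.Ico (0:ℝ) 1 from dI_B0]

lemma cubeVol_B0 (n : ℕ) : cubeVol n (B0 n) = 1 := by
  show (2:ℝ) ^ ((0:ℤ) * (n:ℤ)) = 1
  rw [zero_mul, zpow_zero]

lemma Icc_ae_eq_B0 (n : ℕ) :
    (Set.Icc (0 : Fin n → ℝ) 1 : Set (Fin n → ℝ)) =ᵐ[volume] cubeSet n (B0 n) := by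
  have e1 : (Set.Icc (0 : Fin n → ℝ) 1 : Set (Fin n → ℝ))
      = Set.univ.pi fun _ : Fin n => Set.Icc (0:ℝ) 1 := by
    ext x
    simp only [Set.mem_Icc, Set.mem_univ_pi, Set.mem_Icc, Pi.le_def]
    constructor
    · rintro ⟨h1, h2⟩ t; exact ⟨h1 t, h2 t⟩
    · intro h; exact ⟨fun t => (h t).1, fun t => (h t).2⟩
  have e2 : cubeSet n (B0 n) = Set.univ.pi fun _ : Fin n => Set.Ico (0:ℝ) 1 := by
    ext x
    rw [mem_B0_iff, Set.mem_univ_pi]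
  rw [e1, e2]
  have hsub : (Set.univ.pi fun _ : Fin n => Set.Ico (0:ℝ) 1)
      ⊆ Set.univ.pi fun _ : Fin n => Set.Icc (0:ℝ) 1 :=
    Set.pi_mono fun t _ => Set.Ico_subset_Icc_self
  have hv1 : volume (Set.univ.pi fun _ : Fin n => Set.Icc (0:ℝ) 1) = 1 := by
    rw [volume_pi_pi]
    simp [Real.volume_Icc]
  have hv2 : volume (Set.univ.pi fun _ : Fin n => Set.Ico (0:ℝ) 1) = 1 := by
    rw [volume_pi_pi]
    simp [Real.volume_Ico]
  exact (ae_eq_of_subset_of_measure_ge hsub (by rw [hv1, hv2])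
    (MeasurableSet.univ_pi fun t => measurableSet_Ico).nullMeasurableSet
    (by rw [hv1]; exact ENNReal.one_ne_top)).symm

lemma pi_eq_sum_single {n : ℕ} (g : Fin n → ℝ) :
    g = ∑ j, g j • (Pi.single j (1:ℝ) : Fin n → ℝ) := by
  funext k
  rw [Finset.sum_apply]
  have : ∀ j : Fin n, (g j • (Pi.single j (1:ℝ) : Fin n → ℝ)) k = if k = j then g j else 0 := by
    intro j
    rw [Pi.smul_apply, Pi.single_apply, smul_eq_mul]
    split <;> ring
  rw [Finset.sum_congr rfl fun j _ => this j]
  rw [Finset.sum_ite_eq (Finset.univ : Finset (Fin n)) k g, if_pos (Finset.mem_univ k)]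


end

theorem jensen_inequality_on_range_of_P
    (n : ℕ) (hn : 1 ≤ n) (p : ℝ) (hp : 1 < p)
    (f : (Fin n → ℝ) → ℝ) (hconv : SeparatelyConvex n f)
    (v : Fin n → (Fin n → ℝ) → ℝ)
    (hmem : ∀ j, MemLp (v j) (ENNReal.ofReal p) volume)
    (hfin : ∀ j, ∃ (F : Finset ((Fin n → Bool) × DyadicCube n))
      (c : (Fin n → Bool) × DyadicCube n → ℝ),
        (∀ q ∈ F, q.1 ≠ fun _ => false) ∧
        v j = fun x => ∑ q ∈ F, c q * haarCube n q.1 q.2 x) :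
    f (∫ x in Set.Icc (0 : Fin n → ℝ) 1,
        (fun j => haarProj n (stdDir n j) (v j) x : Fin n → ℝ)) ≤
      ∫ x in Set.Icc (0 : Fin n → ℝ) 1,
        f (fun j => haarProj n (stdDir n j) (v j) x) := by
  classical
  choose F c hFne hveq using hfin
  have hproj : ∀ (x : Fin n → ℝ) (j : Fin n), haarProj n (stdDir n j) (v j) x
      = ∑ Q ∈ (F j).image Prod.snd,
          ((∫ y, v j y * haarCube n (stdDir n j) Q y) / cubeVol n Q)
            * haarCube n (stdDir n j) Q x :=
    fun x j => haarProj_eq_sum (hFne j) j (hveq j) x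
  simp only [hproj]
  set dc : Fin n → DyadicCube n → ℝ := fun j Q =>
    (∫ y, v j y * haarCube n (stdDir n j) Q y) / cubeVol n Q with hdc
  set sQ : Fin n → Finset (DyadicCube n) := fun j => (F j).image Prod.snd with hsQ
  -- switch domain of integration to the half-open unit cube
  rw [setIntegral_congr_set (Icc_ae_eq_B0 n), setIntegral_congr_set (Icc_ae_eq_B0 n)]
  -- split off cubes that are not inside the unit cube
  set pIn : DyadicCube n → Prop := fun Q => cubeSet n Q ⊆ cubeSet n (B0 n) ∧ Q.1 ≤ 0 with hpIn
  set G : Fin n → Finset (DyadicCube n) := fun j => (sQ j).filter pIn with hG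
  set x₀ : Fin n → ℝ := fun _ => (0:ℝ) with hx₀
  have hx₀mem : x₀ ∈ cubeSet n (B0 n) := by
    rw [mem_B0_iff]
    intro t
    rw [Set.mem_Ico]
    norm_num [hx₀]
  set A : Fin n → ℝ := fun j => ∑ Q ∈ (sQ j).filter (fun Q => ¬ pIn Q),
      dc j Q * haarCube n (stdDir n j) Q x₀ with hA
  -- Haar functions of cubes not inside `B0` are constant on `B0`
  have hconst : ∀ (Q : DyadicCube n), ¬ pIn Q → ∀ (j : Fin n) (x y : Fin n → ℝ),
      x ∈ cubeSet n (B0 n) → y ∈ cubeSet n (B0 n) →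
      haarCube n (stdDir n j) Q x = haarCube n (stdDir n j) Q y := by
    intro Q hnp j x y hx hy
    by_cases h1 : Q.1 ≤ 0
    · have hns : ¬ (cubeSet n Q ⊆ cubeSet n (B0 n)) := fun hss => hnp ⟨hss, h1⟩
      obtain ⟨t, ht⟩ : ∃ t, ¬ (dI Q.1 (Q.2 t) ⊆ dI (0:ℤ) (0:ℤ)) := by
        by_contra hcon
        push_neg at hcon
        apply hns
        intro z hz
        rw [mem_cubeSet_iff] at hz
        rw [mem_B0_iff]
        intro t
        rw [← dI_B0]
        exact hcon t (hz t)
      have hdisj : ∀ u, u ∈ dI Q.1 (Q.2 t) → u ∉ dI (0:ℤ) (0:ℤ) := by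
        rcases dI_subset_or_disjoint (k' := Q.1) (k := 0) (i' := Q.2 t) (i := 0) h1 with hss | hd
        · exact absurd hss ht
        · exact hd
      have hzero : ∀ z : Fin n → ℝ, z ∈ cubeSet n (B0 n) → haarCube n (stdDir n j) Q z = 0 := by
        intro z hz
        apply haarCube_eq_zero_of_not_mem
        rw [mem_cubeSet_iff]
        push_neg
        refine ⟨t, fun hmem => ?_⟩
        have : z t ∈ Set.Ico (0:ℝ) 1 := (mem_B0_iff.mp hz) t
        rw [← dI_B0] at this
        exact hdisj (z t) hmem this
      rw [hzero x hx, hzero y hy]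
    · push_neg at h1
      have hcf : ∀ t : Fin n, ∃ cc : ℝ, ∀ u ∈ dI (0:ℤ) (0:ℤ), hcF n (stdDir n j) Q t u = cc := by
        intro t
        unfold hcF
        split
        · exact haarInt_const_on (by omega)
        · exact indInt_const_on (by omega)
      choose cc hcc using hcf
      have hval : ∀ z : Fin n → ℝ, z ∈ cubeSet n (B0 n) →
          haarCube n (stdDir n j) Q z = ∏ t, cc t := by
        intro z hz
        rw [haarCube_eq_prod]
        apply Finset.prod_congr rfl
        intro t _
        apply hcc t
        rw [dI_B0]
        exact (mem_B0_iff.mp hz) t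
      rw [hval x hx, hval y hy]
  -- on `B0`, the expansion regroups as constant plus inside cubes
  have hsplit : ∀ x ∈ cubeSet n (B0 n), ∀ j,
      ∑ Q ∈ sQ j, dc j Q * haarCube n (stdDir n j) Q x
        = A j + ∑ Q ∈ G j, dc j Q * haarCube n (stdDir n j) Q x := by
    intro x hx j
    rw [← Finset.sum_filter_add_sum_filter_not (sQ j) pIn
      (fun Q => dc j Q * haarCube n (stdDir n j) Q x)]
    have : ∑ Q ∈ (sQ j).filter (fun Q => ¬ pIn Q), dc j Q * haarCube n (stdDir n j) Q x
        = A j := by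
      rw [hA]
      apply Finset.sum_congr rfl
      intro Q hQ
      rw [Finset.mem_filter] at hQ
      rw [hconst Q hQ.2 j x x₀ hx hx₀mem]
    rw [this]
    exact add_comm _ _
  -- depth bound
  set dd : ℕ := (Finset.univ.biUnion G).sup (fun Q => (-Q.1).toNat) with hdd
  have hhyp : ∀ j, ∀ Q ∈ G j, cubeSet n Q ⊆ cubeSet n (B0 n)
      ∧ (B0 n).1 - (dd:ℤ) ≤ Q.1 ∧ Q.1 ≤ (B0 n).1 := by
    intro j Q hQ
    have hmem : Q ∈ Finset.univ.biUnion G :=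
      Finset.mem_biUnion.mpr ⟨j, Finset.mem_univ j, hQ⟩
    rw [hG, Finset.mem_filter] at hQ
    refine ⟨hQ.2.1, ?_, hQ.2.2⟩
    have h1 : (-Q.1).toNat ≤ dd := Finset.le_sup (f := fun Q => (-Q.1).toNat) hmem
    have h2 : -Q.1 ≤ ((-Q.1).toNat : ℤ) := Int.self_le_toNat _
    have h3 : (((-Q.1).toNat : ℤ)) ≤ (dd:ℤ) := by exact_mod_cast h1
    show (0:ℤ) - (dd:ℤ) ≤ Q.1
    omega
  obtain ⟨hIntOn, hIneq⟩ := jensen_main hconv dd (B0 n) A G dc hhyp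
  rw [cubeVol_B0, one_mul] at hIneq
  -- scalar integrals of the components
  have hIntScalar : ∀ j, IntegrableOn
      (fun x => A j + ∑ Q ∈ G j, dc j Q * haarCube n (stdDir n j) Q x)
      (cubeSet n (B0 n)) volume := by
    intro j
    apply Integrable.add
    · exact integrableOn_const (C := A j) (volume_cubeSet_ne_top n (B0 n))
    · apply integrable_finset_sum
      intro Q _
      exact ((integrable_haarCube n (stdDir n j) Q).integrableOn).const_mul (dc j Q)
  have hscalar : ∀ j, (∫ x in cubeSet n (B0 n),
      (A j + ∑ Q ∈ G j, dc j Q * haarCube n (stdDir n j) Q x)) = A j := by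
    intro j
    rw [integral_add (integrableOn_const (C := A j)
        (volume_cubeSet_ne_top n (B0 n)))
      (integrable_finset_sum _ (fun Q _ =>
        ((integrable_haarCube n (stdDir n j) Q).integrableOn).const_mul (dc j Q)))]
    rw [setIntegral_const, smul_eq_mul, measureReal_def, volume_cubeSet_toReal, cubeVol_B0, one_mul]
    rw [integral_finset_sum _ (fun Q _ =>
      ((integrable_haarCube n (stdDir n j) Q).integrableOn).const_mul (dc j Q))]
    have : ∀ Q ∈ G j, (∫ x in cubeSet n (B0 n), dc j Q * haarCube n (stdDir n j) Q x) = 0 := by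
      intro Q hQ
      rw [integral_const_mul]
      rw [hG, Finset.mem_filter] at hQ
      rw [setIntegral_haarCube_eq_zero hQ.2.1 (stdDir_self n j), mul_zero]
    rw [Finset.sum_congr rfl this, Finset.sum_const, smul_zero, add_zero]
  -- the vector-valued integral of the regrouped function is A
  have hvec : (∫ x in cubeSet n (B0 n),
      (fun j => A j + ∑ Q ∈ G j, dc j Q * haarCube n (stdDir n j) Q x : Fin n → ℝ)) = A := by
    have hrw : (fun x => (fun j => A j + ∑ Q ∈ G j, dc j Q * haarCube n (stdDir n j) Q x
        : Fin n → ℝ)) = fun x => ∑ j, (A j + ∑ Q ∈ G j, dc j Q * haarCube n (stdDir n j) Q x)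
          • (Pi.single j (1:ℝ) : Fin n → ℝ) := by
      funext x
      exact pi_eq_sum_single _
    rw [hrw]
    rw [integral_finset_sum _ (fun j _ => (hIntScalar j).smul_const (Pi.single j (1:ℝ) : Fin n → ℝ))]
    have : ∀ j : Fin n, (∫ x in cubeSet n (B0 n),
        (A j + ∑ Q ∈ G j, dc j Q * haarCube n (stdDir n j) Q x) • (Pi.single j (1:ℝ) : Fin n → ℝ))
        = A j • (Pi.single j (1:ℝ) : Fin n → ℝ) := by
      intro j
      rw [integral_smul_const, hscalar j]
    rw [Finset.sum_congr rfl fun j _ => this j]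
    exact (pi_eq_sum_single A).symm
  -- put everything together
  have hEq : ∀ x ∈ cubeSet n (B0 n),
      (fun j => ∑ Q ∈ sQ j, dc j Q * haarCube n (stdDir n j) Q x : Fin n → ℝ)
      = (fun j => A j + ∑ Q ∈ G j, dc j Q * haarCube n (stdDir n j) Q x) := by
    intro x hx
    funext j
    exact hsplit x hx j
  have hIccInt : (∫ x in cubeSet n (B0 n),
      (fun j => ∑ Q ∈ sQ j, dc j Q * haarCube n (stdDir n j) Q x : Fin n → ℝ)) = A := by
    rw [setIntegral_congr_fun (measurableSet_cubeSet n (B0 n)) (fun x hx => hEq x hx)]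
    exact hvec
  rw [hIccInt]
  have hIccInt2 : (∫ x in cubeSet n (B0 n),
      f (fun j => ∑ Q ∈ sQ j, dc j Q * haarCube n (stdDir n j) Q x))
      = ∫ x in cubeSet n (B0 n),
        f (fun j => A j + ∑ Q ∈ G j, dc j Q * haarCube n (stdDir n j) Q x) := by
    exact setIntegral_congr_fun (measurableSet_cubeSet n (B0 n))
      (fun x hx => congrArg f (hEq x hx))
  rw [hIccInt2]
  exact hIneq
end

section
/- Let 1 ≤ p < ∞ and let f : ℝ^n → ℝ be separately convex with 0 ≤ f(a) ≤ C(1 + |a|^p) for all a ∈ ℝ^n. Then there is a constant C′ (depending only on C, n, p) such that |f(s) − f(t)| ≤ C′ (1 + |s| + |t|)^{p−1} |s − t| for all s, t ∈ ℝ^n. -/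
open scoped Real

/-- The Euclidean norm on `ℝ^n`. -/
noncomputable def euclNorm (n : ℕ) (x : Fin n → ℝ) : ℝ := Real.sqrt (∑ i, x i ^ 2)

lemma euclNorm_eq (n : ℕ) (x : Fin n → ℝ) :
    euclNorm n x = ‖(WithLp.equiv 2 (Fin n → ℝ)).symm x‖ := by
  rw [euclNorm, EuclideanSpace.norm_eq]
  congr 1
  refine Finset.sum_congr rfl fun i _ => ?_
  rw [WithLp.equiv_symm_apply, WithLp.ofLp_toLp, Real.norm_eq_abs, sq_abs]

lemma euclNorm_nonneg (n : ℕ) (x : Fin n → ℝ) : 0 ≤ euclNorm n x :=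
  Real.sqrt_nonneg _

lemma abs_coord_le_euclNorm (n : ℕ) (x : Fin n → ℝ) (k : Fin n) :
    |x k| ≤ euclNorm n x := by
  rw [euclNorm, ← Real.sqrt_sq_eq_abs]
  exact Real.sqrt_le_sqrt (Finset.single_le_sum (fun i _ => sq_nonneg (x i))
    (Finset.mem_univ k))

lemma euclNorm_mono (n : ℕ) (x y : Fin n → ℝ) (h : ∀ i, |x i| ≤ y i) :
    euclNorm n x ≤ euclNorm n y := by
  apply Real.sqrt_le_sqrt
  refine Finset.sum_le_sum fun i _ => ?_
  calc x i ^ 2 = |x i| ^ 2 := (sq_abs _).symm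
    _ ≤ y i ^ 2 := by
        have := h i
        nlinarith [abs_nonneg (x i)]

lemma euclNorm_add (n : ℕ) (x y : Fin n → ℝ) :
    euclNorm n (x + y) ≤ euclNorm n x + euclNorm n y := by
  simp only [euclNorm_eq]
  rw [WithLp.equiv_symm_apply, WithLp.toLp_add]
  exact norm_add_le _ _

lemma euclNorm_abs (n : ℕ) (x : Fin n → ℝ) :
    euclNorm n (fun i => |x i|) = euclNorm n x := by
  simp [euclNorm, sq_abs]

lemma euclNorm_single (n : ℕ) (k : Fin n) (c : ℝ) :
    euclNorm n (fun i => if i = k then c else 0) = |c| := by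
  have h : ∀ i : Fin n, (if i = k then c else 0) ^ 2 = if i = k then c ^ 2 else 0 :=
    fun i => by split <;> simp
  simp only [euclNorm, h, Finset.sum_ite_eq', Finset.mem_univ, if_true,
    Real.sqrt_sq_eq_abs]

/-- One-dimensional estimate for a nonnegative convex function. -/
lemma oneD_aux {g : ℝ → ℝ} (hg : ConvexOn ℝ Set.univ g) (hg0 : ∀ x, 0 ≤ g x)
    {R M : ℝ} (hR : 0 < R) {a b : ℝ} (hab : a ≤ b)
    (hMb : g (b + R) ≤ M) (hMa : g (a - R) ≤ M) :
    |g b - g a| ≤ M / R * (b - a) := by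
  rcases eq_or_lt_of_le hab with rfl | hab'
  · simp
  · have hba : 0 < b - a := by linarith
    have hM0 : 0 ≤ M := le_trans (hg0 _) hMb
    have h1 : (g b - g a) / (b - a) ≤ (g (b + R) - g b) / (b + R - b) :=
      hg.slope_mono_adjacent (Set.mem_univ a) (Set.mem_univ (b + R)) hab'
        (by linarith)
    have h2 : (g a - g (a - R)) / (a - (a - R)) ≤ (g b - g a) / (b - a) :=
      hg.slope_mono_adjacent (Set.mem_univ (a - R)) (Set.mem_univ b)
        (by linarith) hab'
    have e1 : b + R - b = R := by ring
    have e2 : a - (a - R) = R := by ring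
    rw [e1] at h1
    rw [e2] at h2
    have hup : (g b - g a) / (b - a) ≤ M / R := by
      refine h1.trans ?_
      have hb := hg0 b
      gcongr
      linarith
    have hlo : -(M / R) ≤ (g b - g a) / (b - a) := by
      refine le_trans ?_ h2
      have ha := hg0 a
      rw [neg_div']
      gcongr
      linarith
    rw [abs_le]
    constructor
    · have := mul_le_mul_of_nonneg_right hlo (le_of_lt hba)
      rw [div_mul_cancel₀ _ (ne_of_gt hba)] at this
      linarith
    · have := mul_le_mul_of_nonneg_right hup (le_of_lt hba)
      rw [div_mul_cancel₀ _ (ne_of_gt hba)] at this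
      linarith

/-- Symmetric version of `oneD_aux`. -/
lemma oneD {g : ℝ → ℝ} (hg : ConvexOn ℝ Set.univ g) (hg0 : ∀ x, 0 ≤ g x)
    {R M : ℝ} (hR : 0 < R) (a b : ℝ)
    (hM : ∀ x, |x| ≤ |a| + |b| + R → g x ≤ M) :
    |g b - g a| ≤ M / R * |b - a| := by
  rcases le_total a b with h | h
  · rw [abs_of_nonneg (sub_nonneg.2 h)]
    refine oneD_aux hg hg0 hR h (hM _ ?_) (hM _ ?_)
    · calc |b + R| ≤ |b| + |R| := abs_add_le _ _
        _ ≤ |a| + |b| + R := by rw [abs_of_pos hR]; linarith [abs_nonneg a, abs_nonneg b]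
    · calc |a - R| ≤ |a| + |R| := abs_sub _ _
        _ ≤ |a| + |b| + R := by rw [abs_of_pos hR]; linarith [abs_nonneg a, abs_nonneg b]
  · rw [abs_sub_comm, abs_sub_comm b a, abs_of_nonneg (sub_nonneg.2 h)]
    refine oneD_aux hg hg0 hR h (hM _ ?_) (hM _ ?_)
    · calc |a + R| ≤ |a| + |R| := abs_add_le _ _
        _ ≤ |a| + |b| + R := by rw [abs_of_pos hR]; linarith [abs_nonneg a, abs_nonneg b]
    · calc |b - R| ≤ |b| + |R| := abs_sub _ _
        _ ≤ |a| + |b| + R := by rw [abs_of_pos hR]; linarith [abs_nonneg a, abs_nonneg b]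

theorem separately_convex_lipschitz_estimate
    (n : ℕ) (p : ℝ) (hp : 1 ≤ p) (C : ℝ) (f : (Fin n → ℝ) → ℝ)
    (hconv : SeparatelyConvex n f)
    (hgrowth : ∀ a : Fin n → ℝ, 0 ≤ f a ∧ f a ≤ C * (1 + euclNorm n a ^ p)) :
    ∃ C' : ℝ, ∀ s t : Fin n → ℝ,
      |f s - f t| ≤ C' * (1 + euclNorm n s + euclNorm n t) ^ (p - 1) * euclNorm n (s - t) := by
  classical
  have hp0 : (0:ℝ) ≤ p := by linarith
  have hC : 0 ≤ C := by
    obtain ⟨h0, h1⟩ := hgrowth 0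
    have hz : euclNorm n 0 = 0 := by simp [euclNorm]
    rw [hz, Real.zero_rpow (by linarith : p ≠ 0)] at h1
    linarith
  refine ⟨n * (C * (1 + (4:ℝ) ^ p)), fun s t => ?_⟩
  set R : ℝ := 1 + euclNorm n s + euclNorm n t with hRdef
  have hns := euclNorm_nonneg n s
  have hnt := euclNorm_nonneg n t
  have hR1 : (1:ℝ) ≤ R := by rw [hRdef]; linarith
  have hR : (0:ℝ) < R := by linarith
  have h4p : (0:ℝ) ≤ (4:ℝ) ^ p := Real.rpow_nonneg (by norm_num) p
  have hRp : (0:ℝ) ≤ R ^ p := Real.rpow_nonneg hR.le p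
  set M : ℝ := C * ((1 + (4:ℝ) ^ p) * R ^ p) with hMdef
  have hM0 : 0 ≤ M := by rw [hMdef]; positivity
  have hfM : ∀ a : Fin n → ℝ, euclNorm n a ≤ 4 * R → f a ≤ M := by
    intro a ha
    obtain ⟨_, h1⟩ := hgrowth a
    have h2 : euclNorm n a ^ p ≤ (4 * R) ^ p :=
      Real.rpow_le_rpow (euclNorm_nonneg n a) ha hp0
    have h3 : ((4:ℝ) * R) ^ p = 4 ^ p * R ^ p := Real.mul_rpow (by norm_num) hR.le
    have h4 : (1:ℝ) ≤ R ^ p := by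
      calc (1:ℝ) = 1 ^ p := (Real.one_rpow p).symm
        _ ≤ R ^ p := Real.rpow_le_rpow zero_le_one hR1 hp0
    rw [hMdef]
    calc f a ≤ C * (1 + euclNorm n a ^ p) := h1
      _ ≤ C * ((1 + 4 ^ p) * R ^ p) := by
          apply mul_le_mul_of_nonneg_left ?_ hC
          rw [h3] at h2
          nlinarith
  set q : ℕ → (Fin n → ℝ) := fun k i => if (i : ℕ) < k then t i else s i with hq
  have hq0 : q 0 = s := by funext i; simp [hq]
  have hqn : q n = t := by funext i; simp [hq, i.isLt]
  have key : ∀ k : Fin n,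
      |f (q (k : ℕ)) - f (q ((k : ℕ) + 1))| ≤ M / R * euclNorm n (s - t) := by
    intro k
    set g : ℝ → ℝ := fun u => f (Function.update (q (k : ℕ)) k u) with hg
    have hgconv : ConvexOn ℝ Set.univ g := hconv k (q (k : ℕ))
    have hg0 : ∀ x, 0 ≤ g x := by
      intro x; simp only [hg]; exact (hgrowth _).1
    have hbase : q (k : ℕ) k = s k := by simp [hq]
    have e1 : f (q (k : ℕ)) = g (s k) := by
      have hupd : Function.update (q (k : ℕ)) k (s k) = q (k : ℕ) := by
        rw [← hbase]; exact Function.update_eq_self k (q (k : ℕ))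
      simp only [hg]
      rw [hupd]
    have e2 : f (q ((k : ℕ) + 1)) = g (t k) := by
      simp only [hg]
      congr 1
      funext i
      by_cases hi : i = k
      · subst hi; simp [hq]
      · have hik : (i : ℕ) ≠ (k : ℕ) := fun h => hi (Fin.ext h)
        rw [Function.update_of_ne hi]
        simp only [hq]
        have hiff : ((i:ℕ) < (k:ℕ) + 1) ↔ ((i:ℕ) < (k:ℕ)) := by omega
        rw [if_congr hiff rfl rfl]
    have hMg : ∀ x, |x| ≤ |s k| + |t k| + R → g x ≤ M := by
      intro x hx
      simp only [hg]
      apply hfM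
      have hdecomp : Function.update (q (k : ℕ)) k x
          = q (k : ℕ) + fun i => if i = k then x - q (k : ℕ) k else 0 := by
        funext i
        by_cases hi : i = k
        · subst hi; simp
        · simp [Function.update_of_ne hi, hi]
      have hbnd1 : euclNorm n (q (k : ℕ)) ≤ euclNorm n s + euclNorm n t := by
        have h1 : euclNorm n (q (k : ℕ)) ≤ euclNorm n (fun i => |s i| + |t i|) := by
          apply euclNorm_mono
          intro i
          simp only [hq]
          split
          · exact le_add_of_nonneg_left (abs_nonneg _)
          · exact le_add_of_nonneg_right (abs_nonneg _)
        have h2 : euclNorm n (fun i => |s i| + |t i|) ≤ euclNorm n s + euclNorm n t := by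
          calc euclNorm n (fun i => |s i| + |t i|)
              = euclNorm n ((fun i => |s i|) + (fun i => |t i|)) := rfl
            _ ≤ euclNorm n (fun i => |s i|) + euclNorm n (fun i => |t i|) :=
                euclNorm_add n _ _
            _ = euclNorm n s + euclNorm n t := by rw [euclNorm_abs, euclNorm_abs]
        exact h1.trans h2
      have hsk : |s k| ≤ euclNorm n s := abs_coord_le_euclNorm n s k
      have htk : |t k| ≤ euclNorm n t := abs_coord_le_euclNorm n t k
      have hqkk : |q (k : ℕ) k| ≤ euclNorm n s := by rw [hbase]; exact hsk
      have habs : |x - q (k : ℕ) k| ≤ |x| + |q (k : ℕ) k| := abs_sub _ _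
      calc euclNorm n (Function.update (q (k : ℕ)) k x)
          ≤ euclNorm n (q (k : ℕ))
            + euclNorm n (fun i => if i = k then x - q (k : ℕ) k else 0) := by
            rw [hdecomp]; exact euclNorm_add n _ _
        _ = euclNorm n (q (k : ℕ)) + |x - q (k : ℕ) k| := by rw [euclNorm_single]
        _ ≤ 4 * R := by
            have hRs : euclNorm n s + euclNorm n t = R - 1 := by rw [hRdef]; ring
            linarith
    have hstep := oneD hgconv hg0 hR (s k) (t k) hMg
    have hcoord : |t k - s k| ≤ euclNorm n (s - t) := by
      have h := abs_coord_le_euclNorm n (s - t) k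
      rwa [Pi.sub_apply, abs_sub_comm] at h
    have hMR : 0 ≤ M / R := div_nonneg hM0 hR.le
    rw [e1, e2]
    calc |g (s k) - g (t k)| = |g (t k) - g (s k)| := abs_sub_comm _ _
      _ ≤ M / R * |t k - s k| := hstep
      _ ≤ M / R * euclNorm n (s - t) := mul_le_mul_of_nonneg_left hcoord hMR
  have tele : f s - f t = ∑ k ∈ Finset.range n, (f (q k) - f (q (k + 1))) := by
    rw [Finset.sum_range_sub' (fun k => f (q k)), hq0, hqn]
  have hMRR : M / R = C * (1 + (4:ℝ) ^ p) * R ^ (p - 1) := by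
    rw [hMdef, Real.rpow_sub hR, Real.rpow_one]
    ring
  calc |f s - f t|
      = |∑ k ∈ Finset.range n, (f (q k) - f (q (k + 1)))| := by rw [tele]
    _ ≤ ∑ k ∈ Finset.range n, |f (q k) - f (q (k + 1))| :=
        Finset.abs_sum_le_sum_abs _ _
    _ ≤ ∑ _k ∈ Finset.range n, M / R * euclNorm n (s - t) := by
        refine Finset.sum_le_sum fun k hk => ?_
        exact key ⟨k, Finset.mem_range.1 hk⟩
    _ = n * (M / R * euclNorm n (s - t)) := by
        rw [Finset.sum_const, Finset.card_range, nsmul_eq_mul]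
    _ = ↑n * (C * (1 + 4 ^ p)) * R ^ (p - 1) * euclNorm n (s - t) := by
        rw [hMRR]; ring
end
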